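/- (FTRL regret for linear losses with scaled regularizer) With linear losses ℓ_t(w) = ⟨g_t, w⟩ and regularizers ψ_t(w) = ψ(w)/η_t for a fixed function ψ ≥ 0 with ψ(w_1)/η_0 = 0 (interpreting 1/η_0 = 0), the FTRL iterates w_{t+1} = argmin_w [ψ(w)/η_t + ⟨g_{1:t}, w⟩] satisfy, for any u, ∑_{t=1}^T ⟨g_t, w_t − u⟩ ≤ ψ(u)/η_T + ∑_{t=1}^T [(1/η_{t−1} − 1/η_t)·ψ(w_{t+1}) + ⟨g_t, w_t − w_{t+1}⟩]. -/

import Mathlib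

open Finset
open scoped RealInnerProductSpace

/-- FTRL regret bound for linear losses with regularizers ψ(w)/η_t (1/η_0 interpreted as 0). -/
theorem stmt4 {E : Type*} [NormedAddCommGroup E] [InnerProductSpace ℝ E] (T : ℕ)
    (g : ℕ → E) (ψ : E → ℝ) (hψ : ∀ v, 0 ≤ ψ v)
    (η : ℕ → ℝ) (hη0 : η 0 = 0) (hηpos : ∀ t, 1 ≤ t → 0 < η t)
    (hηmono : ∀ t, 1 ≤ t → η (t + 1) ≤ η t)
    (w : ℕ → E)
    (hmin : ∀ t ∈ Icc 1 T, ∀ v,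
      ψ (w (t + 1)) / η t + ⟪∑ s ∈ Icc 1 t, g s, w (t + 1)⟫ ≤
        ψ v / η t + ⟪∑ s ∈ Icc 1 t, g s, v⟫)
    (u : E) :
    ∑ t ∈ Icc 1 T, ⟪g t, w t - u⟫ ≤
      ψ u / η T + ∑ t ∈ Icc 1 T,
        ((1 / η (t - 1) - 1 / η t) * ψ (w (t + 1)) + ⟪g t, w t - w (t + 1)⟫) := by
  -- Key "be-the-leader" claim by induction.
  have key : ∀ n, n ≤ T →
      ∑ t ∈ Icc 1 n, ⟪g t, w (t + 1)⟫ -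
        ∑ t ∈ Icc 1 n, (1 / η (t - 1) - 1 / η t) * ψ (w (t + 1)) ≤
      ψ (w (n + 1)) / η n + ⟪∑ s ∈ Icc 1 n, g s, w (n + 1)⟫ := by
    intro n
    induction n with
    | zero =>
      intro _
      simp [hη0]
    | succ n ih =>
      intro hn
      have hnT : n ≤ T := Nat.le_of_succ_le hn
      have hIH := ih hnT
      -- minimality of w (n+1) for F_n (trivial when n = 0)
      have hstep : ψ (w (n + 1)) / η n + ⟪∑ s ∈ Icc 1 n, g s, w (n + 1)⟫ ≤
          ψ (w (n + 2)) / η n + ⟪∑ s ∈ Icc 1 n, g s, w (n + 2)⟫ := by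
        rcases Nat.eq_zero_or_pos n with h0 | h1
        · subst h0; simp [hη0]
        · exact hmin n (mem_Icc.mpr ⟨h1, hnT⟩) (w (n + 2))
      rw [Finset.sum_Icc_succ_top (Nat.le_add_left 1 n),
          Finset.sum_Icc_succ_top (Nat.le_add_left 1 n),
          Finset.sum_Icc_succ_top (Nat.le_add_left 1 n)]
      have hadd : ⟪(∑ s ∈ Icc 1 n, g s) + g (n + 1), w (n + 1 + 1)⟫ =
          ⟪∑ s ∈ Icc 1 n, g s, w (n + 1 + 1)⟫ + ⟪g (n + 1), w (n + 1 + 1)⟫ :=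
        inner_add_left _ _ _
      have e1 : ψ (w (n + 2)) / η n = (1 / η n) * ψ (w (n + 2)) := by ring
      have e2 : ψ (w (n + 2)) / η (n + 1) = (1 / η (n + 1)) * ψ (w (n + 2)) := by ring
      have hs : n + 1 - 1 = n := rfl
      show _ ≤ ψ (w (n + 1 + 1)) / η (n + 1) + _
      rw [hadd]
      have : (n + 1 + 1) = n + 2 := rfl
      rw [this, hs]
      linarith [hIH, hstep]
  -- Decompose the regret.
  have expand : ∀ t : ℕ, ⟪g t, w t - u⟫ =
      ⟪g t, w t - w (t + 1)⟫ + ⟪g t, w (t + 1)⟫ - ⟪g t, u⟫ := by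
    intro t
    rw [inner_sub_right, inner_sub_right]
    ring
  have hsum : ∑ t ∈ Icc 1 T, ⟪g t, w t - u⟫ =
      (∑ t ∈ Icc 1 T, ⟪g t, w t - w (t + 1)⟫) +
      (∑ t ∈ Icc 1 T, ⟪g t, w (t + 1)⟫) - ∑ t ∈ Icc 1 T, ⟪g t, u⟫ := by
    rw [← Finset.sum_add_distrib, ← Finset.sum_sub_distrib]
    exact Finset.sum_congr rfl fun t _ => expand t
  have hkey := key T le_rfl
  -- F_T (w (T+1)) ≤ F_T u
  have hlast : ψ (w (T + 1)) / η T + ⟪∑ s ∈ Icc 1 T, g s, w (T + 1)⟫ ≤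
      ψ u / η T + ⟪∑ s ∈ Icc 1 T, g s, u⟫ := by
    rcases Nat.eq_zero_or_pos T with h0 | h1
    · subst h0; simp [hη0]
    · exact hmin T (mem_Icc.mpr ⟨h1, le_rfl⟩) u
  have hGu : ⟪∑ s ∈ Icc 1 T, g s, u⟫ = ∑ s ∈ Icc 1 T, ⟪g s, u⟫ :=
    sum_inner _ _ _
  have hsplit : ∑ t ∈ Icc 1 T,
      ((1 / η (t - 1) - 1 / η t) * ψ (w (t + 1)) + ⟪g t, w t - w (t + 1)⟫) =
      (∑ t ∈ Icc 1 T, (1 / η (t - 1) - 1 / η t) * ψ (w (t + 1))) +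
      ∑ t ∈ Icc 1 T, ⟪g t, w t - w (t + 1)⟫ := Finset.sum_add_distrib
  rw [hsum, hsplit]
  rw [hGu] at hlast
  linarith [hkey, hlast]
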